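/- In ℂ², let F = {f₁,f₂,f₃,f₄} = {(1,0), (0,1), (1,1), (1,−1)} with weights q = (3, 3, 3/2, 3/2). Then every dual G = {g_i}_{i=1}^4 of F satisfies max_{1 ≤ i ≤ 4} q_i |⟨f_i, g_i⟩| ≥ 1, and the canonical dual {f_i/3} = {(1/3,0), (0,1/3), (1/3,1/3), (1/3,−1/3)} is a dual of F achieving max_{1 ≤ i ≤ 4} q_i |⟨f_i, f_i/3⟩| = 1; hence the canonical dual is a 1-erasure probability optimal dual of F. -/

import Mathlib

/-- The four vectors `(1,0), (0,1), (1,1), (1,−1)` in `ℂ²`. -/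
noncomputable def tfFrame : Fin 4 → EuclideanSpace ℂ (Fin 2) :=
  ![(WithLp.equiv 2 (Fin 2 → ℂ)).symm ![1, 0],
    (WithLp.equiv 2 (Fin 2 → ℂ)).symm ![0, 1],
    (WithLp.equiv 2 (Fin 2 → ℂ)).symm ![1, 1],
    (WithLp.equiv 2 (Fin 2 → ℂ)).symm ![1, -1]]

/-- The weights `q = (3, 3, 3/2, 3/2)`. -/
noncomputable def tfWeights : Fin 4 → ℝ := ![3, 3, 3/2, 3/2]

/-- For the tight frame `F = {(1,0),(0,1),(1,1),(1,−1)}` of `ℂ²` with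
weights `q = (3, 3, 3/2, 3/2)`, every dual `G` of `F` satisfies
`max_i q_i |⟨f_i, g_i⟩| ≥ 1`, and the canonical dual `{f_i/3}` is a dual achieving
`max_i q_i |⟨f_i, f_i/3⟩| = 1`; hence the canonical dual is a 1-erasure probability
optimal dual of `F`.  The paper's inner product `⟨a, b⟩` is Mathlib's `⟪b, a⟫_ℂ`. -/
theorem tfFrame_canonical_dual_optimal :
    (∀ G : Fin 4 → EuclideanSpace ℂ (Fin 2),
      (∀ f : EuclideanSpace ℂ (Fin 2), ∑ i, (inner ℂ (tfFrame i) f : ℂ) • G i = f) →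
      1 ≤ ⨆ i, tfWeights i * ‖inner ℂ (G i) (tfFrame i)‖) ∧
    (∀ f : EuclideanSpace ℂ (Fin 2),
      ∑ i, (inner ℂ (tfFrame i) f : ℂ) • ((3 : ℂ)⁻¹ • tfFrame i) = f) ∧
    (⨆ i, tfWeights i * ‖inner ℂ ((3 : ℂ)⁻¹ • tfFrame i) (tfFrame i)‖) = 1 := by
  refine ⟨?_, ?_, ?_⟩
  · intro G hG
    have h1 := congrFun (congrArg (WithLp.equiv 2 (Fin 2 → ℂ)) (hG (tfFrame 0))) 0
    have h2 := congrFun (congrArg (WithLp.equiv 2 (Fin 2 → ℂ)) (hG (tfFrame 1))) 1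
    simp [tfFrame, Fin.sum_univ_four, PiLp.inner_apply, Fin.sum_univ_two] at h1 h2
    have hle : ∀ i, tfWeights i * ‖inner ℂ (G i) (tfFrame i)‖ ≤
        ⨆ i, tfWeights i * ‖inner ℂ (G i) (tfFrame i)‖ :=
      fun i => le_ciSup (f := fun i => tfWeights i * ‖inner ℂ (G i) (tfFrame i)‖)
        (Set.Finite.bddAbove (Set.finite_range _)) i
    have key : ((inner ℂ (G 0) (tfFrame 0) + inner ℂ (G 1) (tfFrame 1)
        + inner ℂ (G 2) (tfFrame 2) + inner ℂ (G 3) (tfFrame 3) : ℂ)) = 2 := by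
      have h3 : (starRingEnd ℂ) ((G 0 0 + G 2 0 + G 3 0) + (G 1 1 + G 2 1 + -G 3 1)) = 2 := by
        rw [h1, h2]; simp; norm_num
      simp only [map_add, map_neg] at h3
      simp [tfFrame, PiLp.inner_apply, Fin.sum_univ_two]
      linear_combination h3
    have habs : (2:ℝ) ≤ ‖inner ℂ (G 0) (tfFrame 0)‖
        + ‖inner ℂ (G 1) (tfFrame 1)‖
        + ‖inner ℂ (G 2) (tfFrame 2)‖
        + ‖inner ℂ (G 3) (tfFrame 3)‖ := by
      have h4 := norm_sum_le Finset.univ (fun i => (inner ℂ (G i) (tfFrame i) : ℂ))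
      rw [Fin.sum_univ_four, Fin.sum_univ_four, key] at h4
      simpa using h4
    have e0 := hle 0; have e1 := hle 1; have e2 := hle 2; have e3 := hle 3
    rw [show tfWeights 0 = 3 from rfl] at e0
    rw [show tfWeights 1 = 3 from rfl] at e1
    rw [show tfWeights 2 = 3/2 from rfl] at e2
    rw [show tfWeights 3 = 3/2 from rfl] at e3
    linarith
  · intro f
    apply (WithLp.equiv 2 (Fin 2 → ℂ)).injective
    funext j
    fin_cases j <;>
      simp [tfFrame, Fin.sum_univ_four, PiLp.inner_apply, Fin.sum_univ_two] <;> ring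
  · have h : (fun i => tfWeights i * ‖inner ℂ ((3 : ℂ)⁻¹ • tfFrame i) (tfFrame i)‖)
        = fun _ => (1:ℝ) := by
      funext i
      fin_cases i <;>
        norm_num [tfFrame, tfWeights, PiLp.inner_apply, Fin.sum_univ_two, Complex.conj_ofNat,
          EuclideanSpace.norm_eq, Real.sq_sqrt]
    rw [h, ciSup_const]
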